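/- Let p be an odd prime with p ≡ 5 or 7 (mod 8), and let i be an integer. Then Σ_{j=0}^{p-1} (j/p)·((i²+4ij+2j²)/p) = 0. -/

import Mathlib

open Finset

section Aux

variable (p : ℕ) [Fact p.Prime]

private lemma aux_hp_ne_two (hp : p % 8 = 5 ∨ p % 8 = 7) : p ≠ 2 := by
  rintro rfl; omega

private lemma aux_hF (hp : p % 8 = 5 ∨ p % 8 = 7) : ringChar (ZMod p) ≠ 2 := by
  rw [ZMod.ringChar_zmod_n]; exact aux_hp_ne_two p hp

private lemma aux_two_ne_zero (hp : p % 8 = 5 ∨ p % 8 = 7) : (2 : ZMod p) ≠ 0 :=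
  Ring.two_ne_zero (aux_hF p hp)

private lemma aux_four_ne_zero (hp : p % 8 = 5 ∨ p % 8 = 7) : (4 : ZMod p) ≠ 0 := by
  intro h
  apply aux_two_ne_zero p hp
  have h2 : (2 : ZMod p) * 2 = 0 := by linear_combination h
  rcases mul_eq_zero.mp h2 with h' | h' <;> exact h'

private lemma aux_chi_four (hp : p % 8 = 5 ∨ p % 8 = 7) :
    quadraticChar (ZMod p) (4 : ZMod p) = 1 := by
  have : (4 : ZMod p) = 2 ^ 2 := by norm_num
  rw [this]; exact quadraticChar_sq_one' (aux_two_ne_zero p hp)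

private lemma aux_chi_neg_two (hp : p % 8 = 5 ∨ p % 8 = 7) :
    quadraticChar (ZMod p) (-2) = -1 := by
  rw [quadraticChar_neg_one_iff_not_isSquare,
    ZMod.exists_sq_eq_neg_two_iff (aux_hp_ne_two p hp)]
  omega

/-- The key cubic character sum vanishes. -/
private lemma aux_sum_cubic (hp : p % 8 = 5 ∨ p % 8 = 7) :
    ∑ x : ZMod p, quadraticChar (ZMod p) (x * (x ^ 2 + 4 * x + 2)) = 0 := by
  set χ := quadraticChar (ZMod p) with hχ
  have h2 : (2 : ZMod p) ≠ 0 := aux_two_ne_zero p hp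
  have h4 : (4 : ZMod p) ≠ 0 := aux_four_ne_zero p hp
  have hχ4 : χ 4 = 1 := aux_chi_four p hp
  have hn2 : χ (-2) = -1 := aux_chi_neg_two p hp
  have hFp : ringChar (ZMod p) ≠ 2 := aux_hF p hp
  set f : ZMod p → ZMod p := fun x => x * (x ^ 2 + 4 * x + 2) with hf
  set S : ℤ := ∑ x : ZMod p, χ (f x) with hS
  set U : ℤ := ∑ x : ZMod p, (if x ^ 2 = 2 then χ (2 + x) else 0) with hU
  set T : ℤ := ∑ y : ZMod p, (if y ^ 2 + 4 * y + 2 = 0 then χ y else 0) with hT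
  -- the double sum
  set D : ℤ := ∑ x : ZMod p, ∑ y : ZMod p,
      (if x ^ 2 + (4 + 2 * y) * x + 2 = 0 then χ (f y) else 0) with hD
  -- first evaluation: inner sum over y
  have hD1 : D = -S + U := by
    have step : ∀ x : ZMod p,
        (∑ y : ZMod p, (if x ^ 2 + (4 + 2 * y) * x + 2 = 0 then χ (f y) else 0))
          = -χ (f x) + (if x ^ 2 = 2 then χ (2 + x) else 0) := by
      intro x
      by_cases hx : x = 0
      · subst hx
        have lhs0 : (∑ y : ZMod p,
            (if (0 : ZMod p) ^ 2 + (4 + 2 * y) * 0 + 2 = 0 then χ (f y) else 0)) = 0 := by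
          apply Finset.sum_eq_zero
          intro y _
          rw [if_neg]
          intro h
          exact h2 (by linear_combination h)
        rw [lhs0,
          if_neg (show ¬(0 : ZMod p) ^ 2 = 2 from fun h => h2 (by linear_combination -h))]
        simp [hf, hχ]
      · -- the condition is y = g
        have hx2 : (2 : ZMod p) * x ≠ 0 := mul_ne_zero h2 hx
        set g : ZMod p := -(x ^ 2 + 4 * x + 2) / (2 * x) with hg
        have hcond : ∀ y : ZMod p,
            (x ^ 2 + (4 + 2 * y) * x + 2 = 0) ↔ y = g := by
          intro y
          rw [hg, eq_div_iff hx2]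
          constructor
          · intro h; linear_combination h
          · intro h; linear_combination h
        have heval : (∑ y : ZMod p, (if x ^ 2 + (4 + 2 * y) * x + 2 = 0 then χ (f y) else 0))
            = χ (f g) := by
          calc (∑ y : ZMod p, (if x ^ 2 + (4 + 2 * y) * x + 2 = 0 then χ (f y) else 0))
              = ∑ y : ZMod p, (if y = g then χ (f y) else 0) :=
                Finset.sum_congr rfl (fun y _ => by simp only [hcond y])
            _ = χ (f g) := by rw [Finset.sum_ite_eq' Finset.univ g (fun y => χ (f y)),
                if_pos (Finset.mem_univ g)]
        rw [heval]
        -- now compute χ (f g)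
        have key : f g = (-2) * f x * ((x ^ 2 - 2) / (4 * x ^ 2)) ^ 2 := by
          simp only [hf, hg]
          have h4x : (4 : ZMod p) * x ^ 2 ≠ 0 := mul_ne_zero h4 (pow_ne_zero 2 hx)
          field_simp
          ring
        rw [key, map_mul, map_mul, hn2]
        by_cases hsq : x ^ 2 = 2
        · rw [if_pos hsq]
          have hzero : (x ^ 2 - 2) / (4 * x ^ 2) = 0 := by rw [hsq]; simp
          rw [hzero]
          have hf2 : f x = 4 * (2 + x) := by
            simp only [hf]; linear_combination (x + 4) * hsq
          rw [hf2, map_mul, hχ4]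
          simp [hχ]
        · rw [if_neg hsq]
          have hu : (x ^ 2 - 2) / (4 * x ^ 2) ≠ 0 := by
            apply div_ne_zero
            · intro h; apply hsq; linear_combination h
            · exact mul_ne_zero h4 (pow_ne_zero 2 hx)
          rw [quadraticChar_sq_one' hu]
          ring
    calc D = ∑ x : ZMod p, (-χ (f x) + (if x ^ 2 = 2 then χ (2 + x) else 0)) :=
          Finset.sum_congr rfl (fun x _ => step x)
      _ = (∑ x : ZMod p, -χ (f x)) + ∑ x : ZMod p, (if x ^ 2 = 2 then χ (2 + x) else 0) :=
          Finset.sum_add_distrib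
      _ = -S + U := by rw [hS, hU, ← Finset.sum_neg_distrib]
  -- second evaluation: inner sum over x
  have hD2 : D = S - T := by
    have step : ∀ y : ZMod p,
        (∑ x : ZMod p, (if x ^ 2 + (4 + 2 * y) * x + 2 = 0 then χ (f y) else 0))
          = χ (f y) * (χ (y ^ 2 + 4 * y + 2) + 1) := by
      intro y
      have hcond : ∀ x : ZMod p,
          (x ^ 2 + (4 + 2 * y) * x + 2 = 0) ↔ (x + (2 + y)) ^ 2 = y ^ 2 + 4 * y + 2 := by
        intro x
        constructor
        · intro h; linear_combination h
        · intro h; linear_combination h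
      have count : (∑ x : ZMod p, (if x ^ 2 + (4 + 2 * y) * x + 2 = 0 then (1 : ℤ) else 0))
          = χ (y ^ 2 + 4 * y + 2) + 1 := by
        calc (∑ x : ZMod p, (if x ^ 2 + (4 + 2 * y) * x + 2 = 0 then (1 : ℤ) else 0))
            = ∑ x : ZMod p,
                (if (x + (2 + y)) ^ 2 = y ^ 2 + 4 * y + 2 then (1 : ℤ) else 0) :=
              Finset.sum_congr rfl (fun x _ => by simp only [hcond x])
          _ = ∑ x : ZMod p, (if x ^ 2 = y ^ 2 + 4 * y + 2 then (1 : ℤ) else 0) := by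
              apply Fintype.sum_equiv (Equiv.addRight (2 + y))
              intro x
              have e : x + (2 + y) = x + 2 + y := by ring
              simp [Equiv.coe_addRight, e]
          _ = χ (y ^ 2 + 4 * y + 2) + 1 := by
              rw [Finset.sum_boole, ← quadraticChar_card_sqrts hFp (y ^ 2 + 4 * y + 2)]
              simp [Set.toFinset_setOf]
      calc (∑ x : ZMod p, (if x ^ 2 + (4 + 2 * y) * x + 2 = 0 then χ (f y) else 0))
          = ∑ x : ZMod p,
              χ (f y) * (if x ^ 2 + (4 + 2 * y) * x + 2 = 0 then (1 : ℤ) else 0) := by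
            apply Finset.sum_congr rfl
            intro x _
            by_cases h : x ^ 2 + (4 + 2 * y) * x + 2 = 0 <;> simp [h]
        _ = χ (f y) * (χ (y ^ 2 + 4 * y + 2) + 1) := by rw [← Finset.mul_sum, count]
    have expand : ∀ y : ZMod p, χ (f y) * (χ (y ^ 2 + 4 * y + 2) + 1)
        = (χ y - (if y ^ 2 + 4 * y + 2 = 0 then χ y else 0)) + χ (f y) := by
      intro y
      by_cases hq : y ^ 2 + 4 * y + 2 = 0
      · rw [if_pos hq]
        have hz : χ (f y) = 0 := by
          have : f y = y * (y ^ 2 + 4 * y + 2) := rfl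
          rw [this, map_mul, hq]
          simp [hχ]
        rw [hz]
        ring
      · rw [if_neg hq]
        have hmul : χ (f y) * χ (y ^ 2 + 4 * y + 2) = χ y := by
          have : f y = y * (y ^ 2 + 4 * y + 2) := rfl
          rw [this, map_mul, mul_assoc, ← map_mul, ← pow_two, quadraticChar_sq_one' hq,
            mul_one]
        linear_combination hmul
    calc D = ∑ y : ZMod p, ∑ x : ZMod p,
          (if x ^ 2 + (4 + 2 * y) * x + 2 = 0 then χ (f y) else 0) := by
          rw [hD]; exact Finset.sum_comm
      _ = ∑ y : ZMod p, χ (f y) * (χ (y ^ 2 + 4 * y + 2) + 1) :=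
          Finset.sum_congr rfl (fun y _ => step y)
      _ = ∑ y : ZMod p,
            ((χ y - (if y ^ 2 + 4 * y + 2 = 0 then χ y else 0)) + χ (f y)) :=
          Finset.sum_congr rfl (fun y _ => expand y)
      _ = ((∑ y : ZMod p, χ y) -
            ∑ y : ZMod p, (if y ^ 2 + 4 * y + 2 = 0 then χ y else 0)) +
            ∑ y : ZMod p, χ (f y) := by
          rw [Finset.sum_add_distrib, Finset.sum_sub_distrib]
      _ = S - T := by rw [hχ, quadraticChar_sum_zero hFp, hS, hT]; ring
  -- relate T and U via the involution y ↦ -(2 + y)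
  have hm1sq : χ (-1) * χ (-1) = 1 := by
    rw [← map_mul]; norm_num
  have hTU : T = χ (-1) * U := by
    have hinv : Function.Involutive (fun y : ZMod p => -(2 + y)) := by
      intro y; ring
    calc T = ∑ y : ZMod p, (if y ^ 2 + 4 * y + 2 = 0 then χ y else 0) := hT
      _ = ∑ x : ZMod p, (if x ^ 2 = 2 then χ (-1) * χ (2 + x) else 0) := by
          apply Fintype.sum_equiv hinv.toPerm
          intro y
          simp only [Function.Involutive.coe_toPerm]
          show _ = (if (-(2 + y)) ^ 2 = 2 then χ (-1) * χ (2 + -(2 + y)) else 0)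
          have hc : ((-(2 + y)) ^ 2 = 2) ↔ y ^ 2 + 4 * y + 2 = 0 := by
            constructor
            · intro h; linear_combination h
            · intro h; linear_combination h
          by_cases hq : y ^ 2 + 4 * y + 2 = 0
          · rw [if_pos hq, if_pos (hc.mpr hq)]
            have e1 : (2 : ZMod p) + -(2 + y) = -1 * y := by ring
            rw [e1, map_mul, ← mul_assoc, hm1sq, one_mul]
          · rw [if_neg hq, if_neg (fun h => hq (hc.mp h))]
      _ = χ (-1) * U := by
          rw [hU, Finset.mul_sum]
          apply Finset.sum_congr rfl
          intro x _
          by_cases hsq : x ^ 2 = 2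
          · rw [if_pos hsq, if_pos hsq]
          · rw [if_neg hsq, if_neg hsq, mul_zero]
  -- combine
  have hcomb : 2 * S = U + χ (-1) * U := by
    have h := hD1.symm.trans hD2
    rw [hTU] at h
    linarith
  have hS0 : 2 * S = 0 := by
    by_cases hex : ∃ r : ZMod p, r ^ 2 = 2
    · obtain ⟨r, hr⟩ := hex
      have hr0 : r ≠ 0 := by
        intro h; subst h; exact h2 (by linear_combination -hr)
      have hχ2 : χ 2 = 1 := by rw [← hr]; exact quadraticChar_sq_one' hr0
      have hχm1 : χ (-1) = -1 := by
        have hm : χ (-1) * χ 2 = -1 := by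
          rw [← map_mul]
          norm_num
          exact hn2
        rw [hχ2, mul_one] at hm
        exact hm
      rw [hχm1] at hcomb
      linarith
    · have hU0 : U = 0 := by
        rw [hU]
        apply Finset.sum_eq_zero
        intro x _
        rw [if_neg (fun h => hex ⟨x, h⟩)]
      rw [hU0] at hcomb
      linarith
  linarith

/-- The quadratic version of the cubic sum. -/
private lemma aux_sum_quad (hp : p % 8 = 5 ∨ p % 8 = 7) :
    ∑ k : ZMod p, quadraticChar (ZMod p) (k * (2 * k ^ 2 + 4 * k + 1)) = 0 := by
  set χ := quadraticChar (ZMod p) with hχ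
  have h2 : (2 : ZMod p) ≠ 0 := aux_two_ne_zero p hp
  have hχ4 : χ 4 = 1 := aux_chi_four p hp
  calc ∑ k : ZMod p, χ (k * (2 * k ^ 2 + 4 * k + 1))
      = ∑ x : ZMod p, χ (x * (x ^ 2 + 4 * x + 2)) := by
        apply Fintype.sum_equiv (Equiv.mulLeft₀ (2 : ZMod p) h2)
        intro k
        simp only [Equiv.coe_fn_mk, Equiv.mulLeft₀_apply]
        have e : (2 * k) * ((2 * k) ^ 2 + 4 * (2 * k) + 2)
            = 4 * (k * (2 * k ^ 2 + 4 * k + 1)) := by ring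
        rw [e, show χ (4 * (k * (2 * k ^ 2 + 4 * k + 1)))
            = χ 4 * χ (k * (2 * k ^ 2 + 4 * k + 1)) from map_mul χ _ _, hχ4, one_mul]
    _ = 0 := aux_sum_cubic p hp

/-- Main identity over `ZMod p`. -/
private lemma aux_sum_main (hp : p % 8 = 5 ∨ p % 8 = 7) (a : ZMod p) :
    ∑ b : ZMod p, quadraticChar (ZMod p) b *
      quadraticChar (ZMod p) (a ^ 2 + 4 * a * b + 2 * b ^ 2) = 0 := by
  set χ := quadraticChar (ZMod p) with hχ
  have hFp : ringChar (ZMod p) ≠ 2 := aux_hF p hp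
  by_cases ha : a = 0
  · subst ha
    have step : ∀ b : ZMod p, χ b * χ (0 ^ 2 + 4 * 0 * b + 2 * b ^ 2) = χ 2 * χ b := by
      intro b
      by_cases hb : b = 0
      · subst hb; simp [hχ]
      · have e : (0 : ZMod p) ^ 2 + 4 * 0 * b + 2 * b ^ 2 = 2 * b ^ 2 := by ring
        rw [e, map_mul, quadraticChar_sq_one' hb, mul_one, mul_comm]
    calc ∑ b : ZMod p, χ b * χ (0 ^ 2 + 4 * 0 * b + 2 * b ^ 2)
        = ∑ b : ZMod p, χ 2 * χ b := Finset.sum_congr rfl (fun b _ => step b)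
      _ = χ 2 * ∑ b : ZMod p, χ b := by rw [Finset.mul_sum]
      _ = 0 := by rw [hχ, quadraticChar_sum_zero hFp, mul_zero]
  · have key := aux_sum_quad p hp
    have step : ∀ k : ZMod p, χ (a * k) * χ (a ^ 2 + 4 * a * (a * k) + 2 * (a * k) ^ 2)
        = χ (a ^ 2) * (χ a * χ (k * (2 * k ^ 2 + 4 * k + 1))) := by
      intro k
      have h1 : a ^ 2 + 4 * a * (a * k) + 2 * (a * k) ^ 2
          = a ^ 2 * (2 * k ^ 2 + 4 * k + 1) := by ring
      rw [h1, map_mul, map_mul, map_mul]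
      ring
    calc ∑ b : ZMod p, χ b * χ (a ^ 2 + 4 * a * b + 2 * b ^ 2)
        = ∑ k : ZMod p, χ (a * k) * χ (a ^ 2 + 4 * a * (a * k) + 2 * (a * k) ^ 2) :=
          (Fintype.sum_equiv (Equiv.mulLeft₀ a ha) _ _
            (fun k => by simp only [Equiv.mulLeft₀_apply])).symm
      _ = ∑ k : ZMod p, χ (a ^ 2) * (χ a * χ (k * (2 * k ^ 2 + 4 * k + 1))) :=
          Finset.sum_congr rfl (fun k _ => step k)
      _ = χ (a ^ 2) * (χ a * ∑ k : ZMod p, χ (k * (2 * k ^ 2 + 4 * k + 1))) := by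
          rw [← Finset.mul_sum, ← Finset.mul_sum]
      _ = 0 := by rw [key]; ring

end Aux

theorem stmt_4 (p : ℕ) [Fact p.Prime] (hp : p % 8 = 5 ∨ p % 8 = 7) (i : ℤ) :
    ∑ j ∈ Finset.range p,
        legendreSym p j * legendreSym p (i ^ 2 + 4 * i * j + 2 * j ^ 2) = 0 := by
  have hp0 : 0 < p := (Fact.out : p.Prime).pos
  haveI : NeZero p := ⟨hp0.ne'⟩
  have key := aux_sum_main p hp (i : ZMod p)
  rw [← key]
  refine Finset.sum_nbij' (fun j : ℕ => (j : ZMod p)) (fun z : ZMod p => z.val)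
    ?_ ?_ ?_ ?_ ?_
  · intro a _; exact Finset.mem_univ _
  · intro z _
    exact Finset.mem_range.mpr (ZMod.val_lt z)
  · intro a ha
    exact ZMod.val_natCast_of_lt (Finset.mem_range.mp ha)
  · intro z _
    exact ZMod.natCast_rightInverse z
  · intro j hj
    have e1 : ((j : ℤ) : ZMod p) = (j : ZMod p) := by push_cast; ring
    have e2 : ((i ^ 2 + 4 * i * j + 2 * j ^ 2 : ℤ) : ZMod p)
        = (i : ZMod p) ^ 2 + 4 * (i : ZMod p) * (j : ZMod p)
          + 2 * (j : ZMod p) ^ 2 := by push_cast; ring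
    simp only [legendreSym, e1, e2]
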